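/- Let G be a graph with a maximal P3-packing S of fewer than k paths and A = V(G) \ V(S). If |A| > 9k, then at least one of the following holds: (i) Comp(G[A]) > 2|N(A)| − |N'_2(A)|, or (ii) Comp_2(G[A]) > |N_2(A)|, where Comp(G[A]) is the number of components of G[A], Comp_2(G[A]) the number of size-2 components, N_2(A) the set of vertices of N(A) adjacent to a size-2 component of G[A], and N'_2(A) ⊆ N_2(A) those adjacent to a size-2 component but to no size-1 component. -/
import Mathlib


open Finset

variable {V : Type*}

/-- vertex set of an (ordered) 3-path -/
def TripSet [DecidableEq V] (t : V × V × V) : Finset V := {t.1, t.2.1, t.2.2}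

/-- a P3-packing: a collection of vertex-disjoint paths on three vertices -/
def IsP3Packing [DecidableEq V] (G : SimpleGraph V) (P : Finset (V × V × V)) : Prop :=
  (∀ t ∈ P, G.Adj t.1 t.2.1 ∧ G.Adj t.2.1 t.2.2 ∧ t.1 ≠ t.2.2) ∧
  (∀ t ∈ P, ∀ s ∈ P, t ≠ s → Disjoint (TripSet t) (TripSet s))

/-- `D` is a 3-path vertex cover of the induced subgraph `G[S]` -/
def IsP3VCOn (G : SimpleGraph V) (S D : Finset V) : Prop :=
  ∀ a b c : V, a ∈ S → b ∈ S → c ∈ S → G.Adj a b → G.Adj b c → a ≠ c →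
    a ∈ D ∨ b ∈ D ∨ c ∈ D

def IsP3VC (G : SimpleGraph V) (C : Finset V) : Prop :=
  ∀ a b c : V, G.Adj a b → G.Adj b c → a ≠ c → a ∈ C ∨ b ∈ C ∨ c ∈ C

def NSet [Fintype V] [DecidableEq V] (G : SimpleGraph V) [DecidableRel G.Adj]
    (S : Finset V) : Finset V :=
  Finset.univ.filter (fun w => w ∉ S ∧ ∃ x ∈ S, G.Adj w x)

/-- a good decomposition `(I, C, R)` of `G` -/
def IsGoodDecomp [Fintype V] [DecidableEq V] (G : SimpleGraph V) [DecidableRel G.Adj]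
    (I C R : Finset V) : Prop :=
  (I ∪ C ∪ R = Finset.univ) ∧ Disjoint I C ∧ Disjoint I R ∧ Disjoint C R ∧
  (∀ a ∈ I, (I.filter (fun b => G.Adj a b)).card ≤ 1) ∧
  (∃ P : Finset (V × V × V), IsP3Packing G P ∧ (∀ t ∈ P, TripSet t ⊆ I ∪ C) ∧
    P.card = C.card) ∧
  (∀ a ∈ I, ∀ b ∈ R, ¬ G.Adj a b)


private lemma walk_adj_of_noP3 {W : Type*} {H : SimpleGraph W}
    (hno : ∀ a b c : W, H.Adj a b → H.Adj b c → a ≠ c → False) :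
    ∀ {x y : W}, H.Walk x y → x = y ∨ H.Adj x y
  | _, _, SimpleGraph.Walk.nil => Or.inl rfl
  | x, y, SimpleGraph.Walk.cons h p => by
    rcases walk_adj_of_noP3 hno p with rfl | hadj
    · exact Or.inr h
    · by_cases hxy : x = y
      · exact Or.inl hxy
      · exact absurd (hno _ _ _ h hadj hxy) id

/-- for a maximal P3-packing `S` of fewer than `k` paths and
`A = V \ V(S)`, if `|A| > 9k` then `Comp(G[A]) > 2|N(A)| - |N'₂(A)|` or
`Comp₂(G[A]) > |N₂(A)|`. -/
theorem stmt12 [Fintype V] [DecidableEq V] (G : SimpleGraph V) [DecidableRel G.Adj]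
    (k : ℕ) (S : Finset (V × V × V)) (hS : IsP3Packing G S)
    (hmax : ∀ S' : Finset (V × V × V), IsP3Packing G S' → S ⊆ S' → S' = S)
    (hk : S.card < k)
    (A : Finset V) (hA : A = Finset.univ \ S.biUnion TripSet)
    (hbig : A.card > 9 * k) :
    (Nat.card ((G.induce (↑A : Set V)).ConnectedComponent) >
      2 * (NSet G A).card -
      ((NSet G A).filter (fun w =>
        (∃ a ∈ A, G.Adj w a ∧ ∃ b ∈ A, G.Adj a b) ∧
        ¬ ∃ a ∈ A, G.Adj w a ∧ ∀ b ∈ A, ¬ G.Adj a b)).card) ∨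
    (Nat.card {c : (G.induce (↑A : Set V)).ConnectedComponent //
        c.supp.ncard = 2} >
      ((NSet G A).filter (fun w => ∃ a ∈ A, G.Adj w a ∧ ∃ b ∈ A, G.Adj a b)).card) := by
  classical
  -- membership in A
  have hA' : ∀ x, x ∈ A ↔ x ∉ S.biUnion TripSet := by
    intro x; subst hA; simp
  -- no P3 inside A
  have hnoP3 : ∀ a ∈ A, ∀ b ∈ A, ∀ c ∈ A, G.Adj a b → G.Adj b c → a ≠ c → False := by
    intro a ha b hb c hc hab hbc hac
    have hdisj : ∀ u ∈ S, Disjoint (TripSet (a, b, c)) (TripSet u) := by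
      intro u hu
      rw [Finset.disjoint_left]
      intro x hx hxu
      have hxA : x ∈ A := by
        have : x = a ∨ x = b ∨ x = c := by simpa [TripSet] using hx
        rcases this with rfl | rfl | rfl <;> assumption
      exact (hA' x).1 hxA (Finset.mem_biUnion.2 ⟨u, hu, hxu⟩)
    have hpack : IsP3Packing G (insert (a, b, c) S) := by
      constructor
      · intro t ht
        rcases Finset.mem_insert.1 ht with rfl | ht
        · exact ⟨hab, hbc, hac⟩
        · exact hS.1 t ht
      · intro t ht s hs hts
        rcases Finset.mem_insert.1 ht with rfl | ht
        · rcases Finset.mem_insert.1 hs with rfl | hs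
          · exact absurd rfl hts
          · exact hdisj s hs
        · rcases Finset.mem_insert.1 hs with rfl | hs
          · exact (hdisj t ht).symm
          · exact hS.2 t ht s hs hts
    have heq := hmax _ hpack (Finset.subset_insert _ _)
    have habc : (a, b, c) ∈ S := heq ▸ Finset.mem_insert_self _ _
    exact (hA' a).1 ha (Finset.mem_biUnion.2 ⟨_, habc, by simp [TripSet]⟩)
  set H := G.induce (↑A : Set V) with hH
  -- no P3 in the induced graph
  have hHno : ∀ a b c : (↑A : Set V), H.Adj a b → H.Adj b c → a ≠ c → False := by
    intro a b c hab hbc hac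
    exact hnoP3 a a.2 b b.2 c c.2 hab hbc (fun h => hac (Subtype.ext h))
  have hreach : ∀ x y : (↑A : Set V), H.Reachable x y → x = y ∨ H.Adj x y := by
    intro x y h
    obtain ⟨p⟩ := h
    exact walk_adj_of_noP3 hHno p
  haveI : Fintype H.ConnectedComponent := Fintype.ofFinite _
  -- fibers of the component map
  set fib : H.ConnectedComponent → Finset (↑A : Set V) :=
    fun c => Finset.univ.filter (fun v => H.connectedComponentMk v = c) with hfib
  have hsupp : ∀ c : H.ConnectedComponent, c.supp.ncard = (fib c).card := by
    intro c
    rw [← Set.ncard_coe_finset]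
    congr 1
    ext v
    simp [hfib, SimpleGraph.ConnectedComponent.supp]
  have hle2 : ∀ c : H.ConnectedComponent, (fib c).card ≤ 2 := by
    intro c
    by_contra hc
    push_neg at hc
    obtain ⟨x, y, z, hx, hy, hz, hxy, hxz, hyz⟩ := Finset.two_lt_card_iff.1 hc
    simp only [hfib, Finset.mem_filter] at hx hy hz
    have hrxy : H.Reachable x y := by
      rw [← SimpleGraph.ConnectedComponent.eq]; rw [hx.2, hy.2]
    have hrxz : H.Reachable x z := by
      rw [← SimpleGraph.ConnectedComponent.eq]; rw [hx.2, hz.2]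
    have haxy : H.Adj x y := (hreach x y hrxy).resolve_left hxy
    have haxz : H.Adj x z := (hreach x z hrxz).resolve_left hxz
    exact hHno y x z haxy.symm haxz hyz
  have hge1 : ∀ c : H.ConnectedComponent, 1 ≤ (fib c).card := by
    intro c
    obtain ⟨v, hv⟩ := c.exists_rep
    exact Finset.card_pos.2 ⟨v, by simp only [hfib, Finset.mem_filter, Finset.mem_univ, true_and]; exact hv⟩
  have hsum : (Finset.univ : Finset (↑A : Set V)).card =
      ∑ c : H.ConnectedComponent, (fib c).card :=
    Finset.card_eq_sum_card_fiberwise (fun x _ => Finset.mem_univ _)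
  have hcardA : A.card = Fintype.card (↑A : Set V) := (Fintype.card_coe A).symm
  -- count bound : |A| ≤ Comp + Comp₂
  have hcomp : A.card ≤ Fintype.card H.ConnectedComponent +
      (Finset.univ.filter (fun c : H.ConnectedComponent => c.supp.ncard = 2)).card := by
    rw [hcardA, ← Finset.card_univ, hsum]
    calc ∑ c : H.ConnectedComponent, (fib c).card
        ≤ ∑ c : H.ConnectedComponent, (1 + if c.supp.ncard = 2 then 1 else 0) := by
          apply Finset.sum_le_sum
          intro c _
          have h1 := hge1 c
          have h2 := hle2 c
          rw [hsupp c]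
          by_cases h : (fib c).card = 2 <;> simp [h] <;> omega
      _ = Fintype.card H.ConnectedComponent +
          (Finset.univ.filter (fun c : H.ConnectedComponent => c.supp.ncard = 2)).card := by
          rw [Finset.sum_add_distrib, Finset.sum_const, Finset.card_filter,
            smul_eq_mul, mul_one, Finset.card_univ]
  -- |N(A)| ≤ 3k
  have hN : (NSet G A).card ≤ 3 * k := by
    have hsub : NSet G A ⊆ S.biUnion TripSet := by
      intro w hw
      simp only [NSet, Finset.mem_filter] at hw
      by_contra hcon
      exact hw.2.1 ((hA' w).2 hcon)
    calc (NSet G A).card ≤ (S.biUnion TripSet).card := Finset.card_le_card hsub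
      _ ≤ ∑ t ∈ S, (TripSet t).card := Finset.card_biUnion_le
      _ ≤ ∑ t ∈ S, 3 := by
          apply Finset.sum_le_sum
          intro t _
          exact (Finset.card_insert_le _ _).trans
            (Nat.succ_le_succ ((Finset.card_insert_le _ _).trans (by simp)))
      _ = 3 * S.card := by rw [Finset.sum_const]; ring
      _ ≤ 3 * k := by omega
  -- conclusion
  by_contra hcon
  push_neg at hcon
  obtain ⟨h1, h2⟩ := hcon
  have hc1 : Nat.card H.ConnectedComponent = Fintype.card H.ConnectedComponent :=
    Nat.card_eq_fintype_card
  have hc2 : Nat.card {c : H.ConnectedComponent // c.supp.ncard = 2} =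
      (Finset.univ.filter (fun c : H.ConnectedComponent => c.supp.ncard = 2)).card := by
    rw [Nat.card_eq_fintype_card, Fintype.card_subtype]
  have hf1 := Finset.card_le_card (Finset.filter_subset (fun w =>
        (∃ a ∈ A, G.Adj w a ∧ ∃ b ∈ A, G.Adj a b) ∧
        ¬ ∃ a ∈ A, G.Adj w a ∧ ∀ b ∈ A, ¬ G.Adj a b) (NSet G A))
  have hf2 := Finset.card_le_card (Finset.filter_subset (fun w =>
        ∃ a ∈ A, G.Adj w a ∧ ∃ b ∈ A, G.Adj a b) (NSet G A))
  rw [hc1] at h1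
  rw [hc2] at h2
  omega
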